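/- For all real x > 1, the Gamma function satisfies x^{x-1/2} e^{-x} √(2π) ≤ Γ(x) ≤ x^{x-1/2} e^{-x} √(2π) e^{1/(12x)}. -/

import Mathlib

open Real Filter Topology Finset Set


noncomputable def sgf (t : ℝ) : ℝ := (t + 1/2) * Real.log (1 + 1/t) - 1

lemma sgf_hasSum {t : ℝ} (ht : 0 < t) :
    HasSum (fun k : ℕ => (1 : ℝ) / (2 * (k+1) + 1) * ((1 / (2 * t + 1)) ^ 2) ^ (k+1)) (sgf t) := by
  let f : ℕ → ℝ := fun k => (1 : ℝ) / (2 * k + 1) * ((1 / (2 * t + 1)) ^ 2) ^ k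
  have h := (Real.hasSum_log_one_add_inv ht).mul_left (t + 1/2)
  have hf : HasSum f ((t + 1/2) * Real.log (1 + t⁻¹)) := by
    convert h using 1
    · rfl
    funext k
    show (1 : ℝ) / (2 * k + 1) * ((1 / (2 * t + 1)) ^ 2) ^ k = _
    rw [← pow_mul]
    have h2 : (2:ℝ) * t + 1 ≠ 0 := by positivity
    rw [pow_add _ (2*k) 1]
    field_simp
  have h0 : f 0 = 1 := by simp [f]
  have h1 := (hasSum_nat_add_iff' (f := f) 1).mpr hf
  simp only [Finset.range_one, sum_singleton, h0] at h1
  have heq : (fun n : ℕ => f (n + 1)) =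
      (fun k : ℕ => (1 : ℝ) / (2 * (k+1) + 1) * ((1 / (2 * t + 1)) ^ 2) ^ (k+1)) := by
    ext k; simp only [f]; push_cast; ring
  rw [heq] at h1
  rw [show (t + 1/2) * Real.log (1 + t⁻¹) - 1 = sgf t by rw [sgf, one_div t]] at h1
  exact h1

lemma sgf_nonneg {t : ℝ} (ht : 0 < t) : 0 ≤ sgf t :=
  (sgf_hasSum ht).nonneg fun k => by positivity

lemma sgf_le {t : ℝ} (ht : 0 < t) : sgf t ≤ 1/(12*t) - 1/(12*(t+1)) := by
  have hu : ((1:ℝ) / (2*t+1))^2 < 1 := by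
    rw [div_pow, one_pow, div_lt_one (by positivity)]
    nlinarith
  have hu0 : (0:ℝ) ≤ ((1:ℝ) / (2*t+1))^2 := by positivity
  have hgeo : HasSum (fun k : ℕ => (1:ℝ)/3 * (((1 / (2*t+1))^2) ^ (k+1)))
      (1/3 * (((1 / (2*t+1))^2) / (1 - (1 / (2*t+1))^2))) := by
    have := (hasSum_geometric_of_lt_one hu0 hu).mul_left (((1:ℝ) / (2*t+1))^2)
    simp_rw [← _root_.pow_succ'] at this
    exact this.mul_left (1/3)
  have hle := hasSum_le (fun k => ?_) (sgf_hasSum ht) hgeo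
  · refine hle.trans (le_of_eq ?_)
    have h1 : (2:ℝ)*t+1 ≠ 0 := by positivity
    have h4 : 1 - ((1:ℝ) / (2*t+1))^2 ≠ 0 := by intro h; nlinarith [sq_nonneg ((1:ℝ)/(2*t+1))]
    have key : ((1:ℝ)/(2*t+1))^2 / (1 - (1/(2*t+1))^2) = 1/(4*t*(t+1)) := by
      rw [div_eq_div_iff h4 (by positivity)]
      field_simp
      ring
    rw [key]
    have h2 : t ≠ 0 := ht.ne'
    have h3 : t + 1 ≠ 0 := by positivity
    field_simp
    ring
  · apply mul_le_mul_of_nonneg_right _ (by positivity)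
    rw [div_le_div_iff₀ (by positivity) (by norm_num)]
    push_cast; linarith



noncomputable def smu (x : ℝ) : ℝ :=
  Real.log (Real.Gamma x) - ((x - 1/2) * Real.log x - x + Real.log (Real.sqrt (2 * Real.pi)))

lemma smu_rec {x : ℝ} (hx : 0 < x) : smu x = smu (x + 1) + sgf x := by
  have hG : Real.Gamma (x + 1) = x * Real.Gamma x := Real.Gamma_add_one hx.ne'
  have hGpos : 0 < Real.Gamma x := Real.Gamma_pos_of_pos hx
  have hlog : Real.log (Real.Gamma (x+1)) = Real.log x + Real.log (Real.Gamma x) := by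
    rw [hG, Real.log_mul hx.ne' hGpos.ne']
  have hx1 : (0:ℝ) < x + 1 := by linarith
  have hlog2 : Real.log (1 + 1/x) = Real.log (x+1) - Real.log x := by
    rw [← Real.log_div hx1.ne' hx.ne']
    congr 1
    field_simp
  simp only [smu, sgf, hlog, hlog2]
  ring

lemma smu_nat (n : ℕ) : smu ((n:ℝ) + 1) = Real.log (Stirling.stirlingSeq (n+1)) - Real.log (Real.sqrt Real.pi) := by
  have hfac : (0:ℝ) < (Nat.factorial n : ℝ) := by exact_mod_cast n.factorial_pos
  have hm : (0:ℝ) < (n:ℝ)+1 := by positivity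
  have hG : Real.Gamma ((n:ℝ)+1) = Nat.factorial n := by
    exact_mod_cast Real.Gamma_nat_eq_factorial n
  have hform := Stirling.log_stirlingSeq_formula (n+1)
  have hfac2 : (((n+1).factorial : ℕ) : ℝ) = ((n:ℝ)+1) * (n.factorial : ℝ) := by
    rw [Nat.factorial_succ]; push_cast; ring
  rw [smu, hG, hform]
  push_cast
  rw [hfac2, Real.log_mul hm.ne' hfac.ne', Real.log_mul (by norm_num : (2:ℝ) ≠ 0) hm.ne',
      Real.log_div hm.ne' (Real.exp_ne_zero 1), Real.log_exp,
      Real.log_sqrt (by positivity), Real.log_sqrt Real.pi_pos.le,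
      Real.log_mul (by norm_num : (2:ℝ) ≠ 0) Real.pi_pos.ne']
  ring

lemma smu_nat_tendsto : Filter.Tendsto (fun n : ℕ => smu ((n:ℝ) + 1)) Filter.atTop (nhds 0) := by
  have h1 := Stirling.tendsto_stirlingSeq_sqrt_pi
  have hπ : (0:ℝ) < Real.sqrt Real.pi := Real.sqrt_pos.mpr Real.pi_pos
  have h2 : Filter.Tendsto (fun n : ℕ => Real.log (Stirling.stirlingSeq (n+1)))
      Filter.atTop (nhds (Real.log (Real.sqrt Real.pi))) := by
    exact ((Real.continuousAt_log hπ.ne').tendsto.comp (h1.comp (Filter.tendsto_add_atTop_nat 1)))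
  have := h2.sub (tendsto_const_nhds (x := Real.log (Real.sqrt Real.pi)))
  rw [sub_self] at this
  exact this.congr fun n => (smu_nat n).symm


noncomputable def sphi (t : ℝ) : ℝ := (t - 1/2) * Real.log t - t

lemma sphi_deriv {s : ℝ} (hs : 0 < s) : HasDerivAt sphi (Real.log s - 1/(2*s)) s := by
  have h : HasDerivAt (fun t : ℝ => (t - 1/2) * Real.log t - t)
      (1 * Real.log s + (s - 1/2) * s⁻¹ - 1) s := by
    exact (((hasDerivAt_id s).sub_const (1/2)).mul (Real.hasDerivAt_log hs.ne')).sub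
      (hasDerivAt_id s)
  convert h using 1
  · rfl
  field_simp
  ring

lemma sphi_diff_bounds {m t : ℝ} (hm : 2 ≤ m) (ht1 : m ≤ t) (ht2 : t ≤ m + 1) :
    (t - m) * (Real.log m - 1/(2*m)) ≤ sphi t - sphi m ∧
      sphi t - sphi m ≤ (t - m) * Real.log (m+1) := by
  have hm0 : (0:ℝ) < m := by linarith
  rcases eq_or_lt_of_le ht1 with h | h
  · subst h; simp
  · have hcont : ContinuousOn sphi (Icc m t) := fun s hs =>
      (sphi_deriv (by linarith [hs.1] : (0:ℝ) < s)).continuousAt.continuousWithinAt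
    obtain ⟨c, hc, hceq⟩ := exists_hasDerivAt_eq_slope sphi (fun s => Real.log s - 1/(2*s)) h
      hcont (fun s hs => sphi_deriv (by linarith [hs.1]))
    have hc0 : (0:ℝ) < c := by linarith [hc.1]
    have hslope_lb : Real.log m - 1/(2*m) ≤ Real.log c - 1/(2*c) := by
      have h1 : Real.log m ≤ Real.log c := Real.log_le_log hm0 hc.1.le
      have h2 : 1/(2*c) ≤ 1/(2*m) := by
        apply one_div_le_one_div_of_le (by linarith) (by linarith [hc.1])
      linarith
    have hslope_ub : Real.log c - 1/(2*c) ≤ Real.log (m+1) := by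
      have h1 : Real.log c ≤ Real.log (m+1) := Real.log_le_log hc0 (by linarith [hc.2, ht2])
      have h2 : 0 < 1/(2*c) := by positivity
      linarith
    have htm : 0 < t - m := by linarith
    constructor
    · have := mul_le_mul_of_nonneg_left hslope_lb htm.le
      rw [hceq] at this
      calc (t-m) * (Real.log m - 1/(2*m)) ≤ (t-m) * ((sphi t - sphi m)/(t-m)) := this
        _ = sphi t - sphi m := by field_simp
    · have := mul_le_mul_of_nonneg_left hslope_ub htm.le
      rw [hceq] at this
      calc sphi t - sphi m = (t-m) * ((sphi t - sphi m)/(t-m)) := by field_simp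
        _ ≤ (t-m) * Real.log (m+1) := this


lemma logGamma_succ {y : ℝ} (hy : 0 < y) :
    Real.log (Real.Gamma (y+1)) = Real.log y + Real.log (Real.Gamma y) := by
  rw [Real.Gamma_add_one hy.ne', Real.log_mul hy.ne' (Real.Gamma_pos_of_pos hy).ne']

lemma logGamma_bounds {m t : ℝ} (hm : 2 ≤ m) (ht1 : m ≤ t) (ht2 : t ≤ m + 1) :
    Real.log (Real.Gamma m) + (t - m) * Real.log (m-1) ≤ Real.log (Real.Gamma t) ∧
    Real.log (Real.Gamma t) ≤ Real.log (Real.Gamma m) + (t - m) * Real.log m := by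
  have hconv := Real.convexOn_log_Gamma
  have hm0 : (0:ℝ) < m := by linarith
  have hm1 : (0:ℝ) < m - 1 := by linarith
  constructor
  · rcases eq_or_lt_of_le ht1 with h | h
    · subst h; simp
    · have hs := hconv.slope_mono_adjacent (x := m - 1) (z := t) (y := m)
        (by simp; linarith) (by simp; linarith) (by linarith) h
      have hΓ : Real.log (Real.Gamma m) - Real.log (Real.Gamma (m-1)) = Real.log (m-1) := by
        have := logGamma_succ hm1
        rw [show m - 1 + 1 = m by ring] at this
        linarith
      simp only [Function.comp_apply] at hs
      rw [show m - (m-1) = 1 by ring, div_one, hΓ] at hs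
      have htm : (0:ℝ) < t - m := by linarith
      have := mul_le_mul_of_nonneg_left hs htm.le
      rw [mul_div_cancel₀ _ htm.ne'] at this
      linarith
  · set b := t - m with hb
    have hb0 : 0 ≤ b := by linarith
    have hb1 : 0 ≤ 1 - b := by linarith
    have hsum : (1 - b) + b = 1 := by ring
    have h2 := hconv.2 (show m ∈ Ioi (0:ℝ) by simp [hm0]) (show m + 1 ∈ Ioi (0:ℝ) by simp; linarith)
      hb1 hb0 hsum
    simp only [smul_eq_mul, Function.comp_apply] at h2
    rw [show (1-b) * m + b * (m+1) = t by rw [hb]; ring] at h2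
    rw [logGamma_succ hm0] at h2
    nlinarith [h2]



lemma smu_sphi (x : ℝ) : smu x = Real.log (Real.Gamma x) - sphi x - Real.log (Real.sqrt (2*Real.pi)) := by
  simp [smu, sphi]; ring

lemma smu_close {m t : ℝ} (hm : 2 ≤ m) (ht1 : m ≤ t) (ht2 : t ≤ m + 1) :
    |smu t - smu m| ≤ 2/(m-1) := by
  have hm1 : (0:ℝ) < m - 1 := by linarith
  have hd : smu t - smu m = (Real.log (Real.Gamma t) - Real.log (Real.Gamma m))
      - (sphi t - sphi m) := by simp [smu_sphi]; ring
  obtain ⟨hφ1, hφ2⟩ := sphi_diff_bounds hm ht1 ht2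
  obtain ⟨hΓ1, hΓ2⟩ := logGamma_bounds hm ht1 ht2
  have htm0 : 0 ≤ t - m := by linarith
  have htm1 : t - m ≤ 1 := by linarith
  rw [abs_le]
  constructor
  · -- lower bound
    have hlog : Real.log (m+1) - Real.log (m-1) ≤ 2/(m-1) := by
      have h := Real.log_le_sub_one_of_pos (show (0:ℝ) < (m+1)/(m-1) by positivity)
      rw [Real.log_div (by linarith) hm1.ne'] at h
      have : (m+1)/(m-1) - 1 = 2/(m-1) := by field_simp; ring
      linarith
    have hlogpos : 0 ≤ Real.log (m+1) - Real.log (m-1) :=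
      sub_nonneg.mpr (Real.log_le_log hm1 (by linarith))
    have key : -(2/(m-1)) ≤ (t-m) * Real.log (m-1) - (t-m) * Real.log (m+1) := by
      have : (t-m) * (Real.log (m+1) - Real.log (m-1)) ≤ 1 * (2/(m-1)) :=
        mul_le_mul htm1 hlog hlogpos (by norm_num)
      nlinarith
    rw [hd]; nlinarith
  · -- upper bound
    have key : (t-m) * Real.log m - (t-m) * (Real.log m - 1/(2*m)) ≤ 2/(m-1) := by
      have h1 : (t-m) * Real.log m - (t-m) * (Real.log m - 1/(2*m)) = (t-m) * (1/(2*m)) := by ring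
      rw [h1]
      have : (t-m) * (1/(2*m)) ≤ 1 * (1/(2*m)) :=
        mul_le_mul_of_nonneg_right htm1 (by positivity)
      have h2 : 1/(2*m) ≤ 2/(m-1) := by
        rw [div_le_div_iff₀ (by linarith) hm1]; nlinarith
      linarith
    rw [hd]; nlinarith

lemma smu_shift_tendsto {x : ℝ} (hx : 1 < x) :
    Filter.Tendsto (fun N : ℕ => smu (x + N)) Filter.atTop (nhds 0) := by
  set k := ⌊x⌋₊ with hk
  have hx0 : (0:ℝ) ≤ x := by linarith
  have hk1 : 1 ≤ k := Nat.le_floor (by exact_mod_cast hx.le)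
  have hkx : (k:ℝ) ≤ x := Nat.floor_le hx0
  have hxk : x < (k:ℝ) + 1 := Nat.lt_floor_add_one x
  -- integer part tendsto
  have h1 : Filter.Tendsto (fun N : ℕ => smu ((k + N : ℕ) : ℝ)) Filter.atTop (nhds 0) := by
    have hcomp : Filter.Tendsto (fun N : ℕ => (k - 1) + N) Filter.atTop Filter.atTop := by
      rw [show (fun N : ℕ => (k-1)+N) = (fun N : ℕ => N + (k-1)) from funext fun N => by omega]
      exact Filter.tendsto_add_atTop_nat _
    have := smu_nat_tendsto.comp hcomp
    refine this.congr fun N => ?_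
    simp only [Function.comp_apply]
    congr 1
    push_cast [Nat.cast_sub hk1]
    ring
  -- the difference tends to 0
  have h2 : Filter.Tendsto (fun N : ℕ => smu (x + N) - smu ((k + N : ℕ) : ℝ))
      Filter.atTop (nhds 0) := by
    apply squeeze_zero_norm' (a := fun N : ℕ => 2 / N)
    · filter_upwards [Filter.eventually_ge_atTop 1] with N hN
      have hm2 : (2:ℝ) ≤ ((k + N : ℕ) : ℝ) := by
        have : 2 ≤ k + N := by omega
        exact_mod_cast this
      have hb1 : ((k + N : ℕ) : ℝ) ≤ x + N := by push_cast; linarith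
      have hb2 : x + N ≤ ((k + N : ℕ) : ℝ) + 1 := by push_cast; linarith
      have := smu_close hm2 hb1 hb2
      refine this.trans ?_
      have hN1 : (1:ℝ) ≤ N := by exact_mod_cast hN
      have hden : (N:ℝ) ≤ ((k + N : ℕ) : ℝ) - 1 := by
        push_cast
        have : (1:ℝ) ≤ k := by exact_mod_cast hk1
        linarith
      apply div_le_div_of_nonneg_left (by norm_num) (by linarith) hden
    · exact tendsto_const_div_atTop_nhds_zero_nat 2
  have := h1.add h2
  rw [add_zero] at this
  exact this.congr fun N => by ring

lemma smu_telescope {x : ℝ} (hx : 0 < x) (N : ℕ) :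
    smu x = smu (x + N) + ∑ n ∈ range N, sgf (x + n) := by
  induction N with
  | zero => simp
  | succ N ih =>
    rw [ih, Finset.sum_range_succ, smu_rec (show (0:ℝ) < x + N by positivity)]
    push_cast
    ring


/-- Stirling bounds for the Gamma function: for all real `x > 1`,
`x^(x-1/2) e^{-x} √(2π) ≤ Γ(x) ≤ x^(x-1/2) e^{-x} √(2π) e^{1/(12x)}`. -/
theorem gamma_stirling_bounds (x : ℝ) (hx : 1 < x) :
    x ^ (x - 1/2) * Real.exp (-x) * Real.sqrt (2 * Real.pi) ≤ Real.Gamma x ∧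
    Real.Gamma x ≤
      x ^ (x - 1/2) * Real.exp (-x) * Real.sqrt (2 * Real.pi) * Real.exp (1 / (12 * x)) := by
  have hx0 : (0:ℝ) < x := by linarith
  -- bounds on smu x
  have hsum_lb : ∀ N : ℕ, 0 ≤ ∑ n ∈ range N, sgf (x + n) := fun N =>
    Finset.sum_nonneg fun n _ => sgf_nonneg (by positivity)
  have hsum_ub : ∀ N : ℕ, ∑ n ∈ range N, sgf (x + n) ≤ 1 / (12 * x) := by
    intro N
    have h2 := Finset.sum_range_sub' (fun i : ℕ => 1/(12*(x+(i:ℝ)))) N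
    push_cast at h2
    have h1 : ∑ n ∈ range N, sgf (x + n) ≤
        ∑ n ∈ range N, (1/(12*(x+(n:ℝ))) - 1/(12*(x+((n:ℝ)+1)))) := by
      apply Finset.sum_le_sum
      intro n _
      have := sgf_le (show (0:ℝ) < x + n by positivity)
      rw [show x+((n:ℝ)+1) = (x+(n:ℝ))+1 by ring]
      linarith
    rw [h2] at h1
    have h3 : (0:ℝ) ≤ 1/(12*(x+N)) := by positivity
    rw [add_zero] at h1
    linarith
  have hlim : Filter.Tendsto (fun N : ℕ => smu x - smu (x + N)) Filter.atTop (nhds (smu x)) := by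
    have := (tendsto_const_nhds (x := smu x) (f := Filter.atTop (α := ℕ))).sub
      (smu_shift_tendsto hx)
    rwa [sub_zero] at this
  have heq : ∀ N : ℕ, smu x - smu (x + N) = ∑ n ∈ range N, sgf (x + n) := fun N => by
    rw [smu_telescope hx0 N]; ring
  have hmu0 : 0 ≤ smu x := ge_of_tendsto' hlim fun N => by rw [heq N]; exact hsum_lb N
  have hmu1 : smu x ≤ 1 / (12 * x) := le_of_tendsto' hlim fun N => by
    rw [heq N]; exact hsum_ub N
  -- convert to the stated form
  have hΓ : 0 < Real.Gamma x := Real.Gamma_pos_of_pos hx0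
  have hlhs : x ^ (x - 1/2) * Real.exp (-x) * Real.sqrt (2 * Real.pi)
      = Real.exp ((x - 1/2) * Real.log x - x + Real.log (Real.sqrt (2 * Real.pi))) := by
    have hsq : (0:ℝ) < Real.sqrt (2*Real.pi) := by positivity
    rw [Real.rpow_def_of_pos hx0, ← Real.exp_add]
    nth_rewrite 1 [← Real.exp_log hsq]
    rw [← Real.exp_add]
    ring_nf
  have hΓeq : Real.Gamma x = Real.exp (((x - 1/2) * Real.log x - x
      + Real.log (Real.sqrt (2 * Real.pi))) + smu x) := by
    rw [smu]
    rw [show (x - 1/2) * Real.log x - x + Real.log (Real.sqrt (2*Real.pi)) +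
      (Real.log (Real.Gamma x) - ((x - 1/2) * Real.log x - x + Real.log (Real.sqrt (2*Real.pi))))
      = Real.log (Real.Gamma x) by ring, Real.exp_log hΓ]
  constructor
  · rw [hlhs, hΓeq]
    exact Real.exp_le_exp.mpr (by linarith)
  · rw [hlhs, hΓeq, ← Real.exp_add]
    exact Real.exp_le_exp.mpr (by linarith)
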